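/- Let K₀ be a number field and K a quadratic field extension of K₀, with rings of integers O_{K₀} ⊆ O_K. Let 𝔣₀ be a nonzero ideal of O_{K₀} and set R = O_{K₀}/𝔣₀. Then there exists α ∈ O_K such that the quotient O_K/𝔣₀O_K, viewed as an R-module via the canonical map O_{K₀} → O_K/𝔣₀O_K, decomposes as O_K/𝔣₀O_K = R·1 ⊕ R·ᾱ, where ᾱ is the class of α; that is, every element of O_K/𝔣₀O_K is uniquely of the form x·1 + y·ᾱ with x, y ∈ R. -/

import Mathlib

open NumberField

set_option synthInstance.maxHeartbeats 400000
set_option maxHeartbeats 800000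

open UniqueFactorizationMonoid Multiset in

/-- 1.5-generation: in a Dedekind domain, for nonzero ideals `I J` there is `x ∈ I`
with `I ≤ span {x} ⊔ I * J`. -/
theorem Ideal.exists_span_sup_mul {A : Type*} [CommRing A] [IsDedekindDomain A]
    (I J : Ideal A) (hI : I ≠ ⊥) (hJ : J ≠ ⊥) :
    ∃ x ∈ I, I ≤ Ideal.span {x} ⊔ I * J := by
  classical
  by_cases hT : I * J = ⊤
  · exact ⟨0, I.zero_mem, by simp [hT]⟩
  have hIJ0 : I * J ≠ ⊥ := by
    simp only [Ne, Ideal.mul_eq_bot, not_or]; exact ⟨hI, hJ⟩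
  set s : Finset (Ideal A) := (normalizedFactors (I * J)).toFinset with hs
  have hsprime : ∀ p ∈ s, Prime p := fun p hp =>
    prime_of_normalized_factor p (Multiset.mem_toFinset.mp hp)
  set e : Ideal A → ℕ := fun p => (normalizedFactors I).count p with he
  -- choose xp ∈ p^(e p) \ p^(e p + 1)
  have hxp : ∀ p ∈ s, ∃ x ∈ p ^ (e p), x ∉ p ^ (e p + 1) := by
    intro p hp
    exact Ideal.exists_mem_pow_notMem_pow_succ p (hsprime p hp).ne_zero
      (Ideal.isPrime_of_prime (hsprime p hp)).ne_top (e p)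
  choose! xp hxp1 hxp2 using hxp
  obtain ⟨y, hy⟩ := IsDedekindDomain.exists_forall_sub_mem_ideal (s := s) id
    (fun p => e p + 1) hsprime (fun i _ j _ hij => hij) (fun p => xp p)
  simp only [id_eq] at hy
  have hy1 : ∀ p ∈ s, y ∈ p ^ (e p) := by
    intro p hp
    have := hy p hp
    have : y = (y - xp p) + xp p := by ring
    rw [this]
    exact add_mem (Ideal.pow_le_pow_right (Nat.le_succ _) (hy p hp)) (hxp1 p hp)
  have hy2 : ∀ p ∈ s, y ∉ p ^ (e p + 1) := by
    intro p hp hmem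
    exact hxp2 p hp (by simpa using sub_mem hmem (hy p hp))
  have hsne : ∃ p, p ∈ s := by
    obtain ⟨m, hm, hlem⟩ := Ideal.exists_le_maximal _ hT
    refine ⟨m, Multiset.mem_toFinset.mpr ?_⟩
    exact (Ideal.mem_normalizedFactors_iff hIJ0).mpr ⟨hm.isPrime, hlem⟩
  have hy0 : y ≠ 0 := by
    obtain ⟨p, hp⟩ := hsne
    intro h
    exact hy2 p hp (h ▸ zero_mem _)
  have hspan0 : Ideal.span {y} ≠ ⊥ := by
    simpa [Ideal.span_singleton_eq_bot] using hy0
  -- count of span y at p ∈ s equals e p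
  have hcount : ∀ p ∈ s, (normalizedFactors (Ideal.span {y})).count p = e p := by
    intro p hp
    haveI : (p : Ideal A).IsPrime := Ideal.isPrime_of_prime (hsprime p hp)
    refine Ideal.count_normalizedFactors_eq ?_ ?_
    · exact (Ideal.span_singleton_le_iff_mem _).mpr (hy1 p hp)
    · intro hle
      exact hy2 p hp ((Ideal.span_singleton_le_iff_mem _).mp hle)
  -- membership in s for factors of I
  have hIsub : ∀ p, p ∈ normalizedFactors I → p ∈ s := by
    intro p hp
    rw [hs, Multiset.mem_toFinset]
    exact Multiset.mem_of_le ((dvd_iff_normalizedFactors_le_normalizedFactors hI hIJ0).mp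
      (Dvd.intro J rfl)) hp
  -- y ∈ I
  have hyI : y ∈ I := by
    rw [← Ideal.span_singleton_le_iff_mem, ← Ideal.dvd_iff_le,
      dvd_iff_normalizedFactors_le_normalizedFactors hI hspan0, Multiset.le_iff_count]
    intro p
    by_cases hp : p ∈ normalizedFactors I
    · rw [hcount p (hIsub p hp)]
    · simp [Multiset.count_eq_zero_of_notMem hp]
  refine ⟨y, hyI, ?_⟩
  -- I ≤ span y ⊔ I * J
  rw [← Ideal.dvd_iff_le, sup_eq_prod_inf_factors hspan0 hIJ0,
    dvd_iff_normalizedFactors_le_normalizedFactors _ hI, Multiset.le_iff_count]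
  rotate_left
  · exact Multiset.prod_ne_zero_of_prime _ fun p hp =>
      prime_of_normalized_factor _ (Multiset.mem_inter.mp hp).1
  intro p
  rw [normalizedFactors_prod_of_prime (fun p hp =>
      prime_of_normalized_factor _ (Multiset.mem_inter.mp hp).1), Multiset.count_inter]
  by_cases hp : p ∈ s
  · rw [hcount p hp]
    exact min_le_left _ _
  · have : (normalizedFactors (I * J)).count p = 0 :=
      Multiset.count_eq_zero_of_notMem (fun h => hp (Multiset.mem_toFinset.mpr h))
    rw [this]
    simp

/-- Let `K / K₀` be a quadratic extension of number fields with rings of integers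
`𝓞 K₀ ⊆ 𝓞 K`, and `𝔣₀` a nonzero ideal of `𝓞 K₀`, `R = 𝓞 K₀ ⧸ 𝔣₀`.  Then there is an
`α ∈ 𝓞 K` such that `𝓞 K ⧸ 𝔣₀ 𝓞 K = R · 1 ⊕ R · ᾱ`: every element of `𝓞 K ⧸ 𝔣₀ 𝓞 K` is
uniquely of the form `x · 1 + y · ᾱ` with `x, y ∈ R` (where `R` acts via the canonical
ring homomorphism `𝓞 K₀ ⧸ 𝔣₀ → 𝓞 K ⧸ 𝔣₀ 𝓞 K`). -/
theorem quotient_free_rank_two (K₀ K : Type*) [Field K₀] [NumberField K₀]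
    [Field K] [NumberField K] [Algebra K₀ K] (h2 : Module.finrank K₀ K = 2)
    (𝔣₀ : Ideal (𝓞 K₀)) (h𝔣₀ : 𝔣₀ ≠ ⊥) :
    ∃ α : 𝓞 K, ∀ z : (𝓞 K) ⧸ Ideal.map (algebraMap (𝓞 K₀) (𝓞 K)) 𝔣₀,
      ∃! p : ((𝓞 K₀) ⧸ 𝔣₀) × ((𝓞 K₀) ⧸ 𝔣₀),
        z = Ideal.quotientMap (Ideal.map (algebraMap (𝓞 K₀) (𝓞 K)) 𝔣₀)
              (algebraMap (𝓞 K₀) (𝓞 K)) Ideal.le_comap_map p.1 +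
            Ideal.quotientMap (Ideal.map (algebraMap (𝓞 K₀) (𝓞 K)) 𝔣₀)
              (algebraMap (𝓞 K₀) (𝓞 K)) Ideal.le_comap_map p.2 *
            Ideal.Quotient.mk (Ideal.map (algebraMap (𝓞 K₀) (𝓞 K)) 𝔣₀) α := by
  classical
  -- step 1: an integer not in K₀
  obtain ⟨b, hb⟩ : ∃ b : 𝓞 K, (algebraMap (𝓞 K) K b) ∉ Set.range (algebraMap K₀ K) := by
    by_contra h
    push_neg at h
    have hbot : (⊥ : Subalgebra K₀ K) = ⊤ := by
      rw [eq_top_iff]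
      intro x _
      obtain ⟨n, d, hd, hx⟩ := IsFractionRing.div_surjective (A := 𝓞 K) x
      obtain ⟨yn, hyn⟩ := h n
      obtain ⟨yd, hyd⟩ := h d
      rw [Algebra.mem_bot]
      exact ⟨yn / yd, by rw [map_div₀, hyn, hyd, hx]⟩
    have := Subalgebra.bot_eq_top_iff_finrank_eq_one.mp hbot
    rw [h2] at this; norm_num at this
  have hli : LinearIndependent K₀ ![(1 : K), algebraMap (𝓞 K) K b] := by
    rw [LinearIndependent.pair_iff]
    intro s t hst
    by_cases ht : t = 0
    · subst ht
      simp only [smul_zero, zero_smul, add_zero, smul_eq_mul, mul_one] at hst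
      have : algebraMap K₀ K s = 0 := by
        rw [Algebra.algebraMap_eq_smul_one, hst]
      exact ⟨by simpa using (map_eq_zero _).mp this, rfl⟩
    · exfalso
      apply hb
      refine ⟨-s / t, ?_⟩
      have h1 : algebraMap K₀ K s + algebraMap K₀ K t * algebraMap (𝓞 K) K b = 0 := by
        rw [← hst, Algebra.algebraMap_eq_smul_one s, ← Algebra.smul_def]
      field_simp [map_div₀]
      have ht' : algebraMap K₀ K t ≠ 0 := by simpa using ht
      rw [map_neg, map_div₀]; field_simp
      linear_combination -h1
  set ιK := algebraMap (𝓞 K) K with hιK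
  have hcard : Fintype.card (Fin 2) = Module.finrank K₀ K := by simp [h2]
  set bas : Module.Basis (Fin 2) K₀ K := basisOfLinearIndependentOfCardEqFinrank hli hcard with hbasdef
  have hbasc : ⇑bas = ![(1 : K), ιK b] := by
    rw [hbasdef, coe_basisOfLinearIndependentOfCardEqFinrank]
  have hbas0 : bas 0 = 1 := by rw [hbasc]; rfl
  have hbas1 : bas 1 = ιK b := by rw [hbasc]; rfl
  set τ := bas.coord 0 with hτdef
  set π := bas.coord 1 with hπdef
  have hrecon : ∀ x : K, algebraMap K₀ K (τ x) + algebraMap K₀ K (π x) * ιK b = x := by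
    intro x
    have h := bas.sum_repr x
    rw [Fin.sum_univ_two, hbas0, hbas1] at h
    rw [hτdef, hπdef, Module.Basis.coord_apply, Module.Basis.coord_apply]
    conv_rhs => rw [← h]
    rw [Algebra.smul_def, Algebra.smul_def]
    ring
  have hτalg : ∀ y : K₀, τ (algebraMap K₀ K y) = y := by
    intro y
    have : algebraMap K₀ K y = y • bas 0 := by
      rw [hbas0, Algebra.algebraMap_eq_smul_one]
    rw [hτdef, this, map_smul, Module.Basis.coord_apply, Module.Basis.repr_self_apply]
    simp
  have hπalg : ∀ y : K₀, π (algebraMap K₀ K y) = 0 := by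
    intro y
    have : algebraMap K₀ K y = y • bas 0 := by
      rw [hbas0, Algebra.algebraMap_eq_smul_one]
    rw [hπdef, this, map_smul, Module.Basis.coord_apply, Module.Basis.repr_self_apply]
    simp
  have hτb : τ (ιK b) = 0 := by
    rw [hτdef, ← hbas1, Module.Basis.coord_apply, Module.Basis.repr_self_apply]; simp
  have hπb : π (ιK b) = 1 := by
    rw [hπdef, ← hbas1, Module.Basis.coord_apply, Module.Basis.repr_self_apply]; simp
  -- A-linear maps
  set f := algebraMap (𝓞 K₀) (𝓞 K) with hfdef
  set ιₗ : (𝓞 K) →ₗ[𝓞 K₀] K := (IsScalarTower.toAlgHom (𝓞 K₀) (𝓞 K) K).toLinearMap with hιₗ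
  set ℓ : (𝓞 K) →ₗ[𝓞 K₀] K₀ := (π.restrictScalars (𝓞 K₀)) ∘ₗ ιₗ with hℓdef
  set τ' : (𝓞 K) →ₗ[𝓞 K₀] K₀ := (τ.restrictScalars (𝓞 K₀)) ∘ₗ ιₗ with hτ'def
  have hℓ : ∀ z : 𝓞 K, ℓ z = π (ιK z) := fun z => rfl
  have hτ' : ∀ z : 𝓞 K, τ' z = τ (ιK z) := fun z => rfl
  have hfK : ∀ e : 𝓞 K₀, ιK (f e) = algebraMap K₀ K (algebraMap (𝓞 K₀) K₀ e) := by
    intro e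
    rw [hιK, hfdef, ← IsScalarTower.algebraMap_apply,
      IsScalarTower.algebraMap_apply (𝓞 K₀) K₀ K]
  have hℓf : ∀ e : 𝓞 K₀, ℓ (f e) = 0 := by
    intro e; rw [hℓ, hfK]; exact hπalg _
  have hτ'f : ∀ e : 𝓞 K₀, τ' (f e) = algebraMap (𝓞 K₀) K₀ e := by
    intro e; rw [hτ', hfK]; exact hτalg _
  have hKER : ∀ y : 𝓞 K, ℓ y = 0 → ∃ e : 𝓞 K₀, y = f e := by
    intro y hy
    rw [hℓ] at hy
    have hrec : algebraMap K₀ K (τ (ιK y)) = ιK y := by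
      have h' := hrecon (ιK y)
      rw [hy] at h'
      simpa using h'
    have hsint : IsIntegral ℤ (τ (ιK y)) := by
      rw [← isIntegral_algebraMap_iff (algebraMap K₀ K).injective, hrec]
      exact y.2
    refine ⟨⟨τ (ιK y), (show τ (ιK y) ∈ integralClosure ℤ K₀ from hsint)⟩, ?_⟩
    apply NumberField.RingOfIntegers.ext
    rw [NumberField.RingOfIntegers.coe_eq_algebraMap, NumberField.RingOfIntegers.coe_eq_algebraMap,
      ← hιK]
    have hval : algebraMap (𝓞 K₀) K₀ ⟨τ (ιK y), (show τ (ιK y) ∈ integralClosure ℤ K₀ from hsint)⟩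
        = τ (ιK y) := by rfl
    exact hrec.symm.trans ((congrArg (algebraMap K₀ K) hval).symm.trans (hfK _).symm)
  haveI hModF : Module.Finite (𝓞 K₀) (𝓞 K) :=
    Module.Finite.of_restrictScalars_finite ℤ _ _
  set I' : Submodule (𝓞 K₀) K₀ := LinearMap.range ℓ with hI'def
  have hI'fg : I'.FG := by
    rw [hI'def, LinearMap.range_eq_map]
    exact (Module.finite_def.mp hModF).map ℓ
  obtain ⟨T, hT⟩ := hI'fg
  obtain ⟨c, hc⟩ := IsLocalization.exist_integer_multiples
    (nonZeroDivisors (𝓞 K₀)) (S := K₀) T id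
  set c' : K₀ := algebraMap (𝓞 K₀) K₀ (c : 𝓞 K₀) with hc'def
  have hc0 : (c : 𝓞 K₀) ≠ 0 := nonZeroDivisors.coe_ne_zero c
  have hc'0 : c' ≠ 0 := by
    rw [hc'def]
    simpa using hc0
  set mulc : K₀ →ₗ[𝓞 K₀] K₀ := (LinearMap.mul K₀ K₀ c').restrictScalars (𝓞 K₀) with hmulc
  have hmulc_apply : ∀ y : K₀, mulc y = c' * y := fun y => rfl
  have hden : ∀ y ∈ I', ∃ a : 𝓞 K₀, algebraMap (𝓞 K₀) K₀ a = c' * y := by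
    have hN : I' ≤ Submodule.comap mulc (LinearMap.range (Algebra.linearMap (𝓞 K₀) K₀)) := by
      rw [← hT, Submodule.span_le]
      intro y hy
      obtain ⟨a, ha⟩ := hc y hy
      refine Submodule.mem_comap.mpr ⟨a, ?_⟩
      rw [Algebra.linearMap_apply, ha, hmulc_apply, hc'def, id_eq, Algebra.smul_def]
    intro y hy
    obtain ⟨a, ha⟩ := hN hy
    exact ⟨a, by rw [← hmulc_apply]; exact ha⟩
  set cI' : Submodule (𝓞 K₀) K₀ := Submodule.map mulc I' with hcI'def
  set IdI : Ideal (𝓞 K₀) := Submodule.comap (Algebra.linearMap (𝓞 K₀) K₀) cI' with hIdIdef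
  have hmemI : ∀ a : 𝓞 K₀, a ∈ IdI ↔ ∃ w : 𝓞 K, algebraMap (𝓞 K₀) K₀ a = c' * ℓ w := by
    intro a
    constructor
    · intro ha
      have ha' : algebraMap (𝓞 K₀) K₀ a ∈ cI' := ha
      obtain ⟨y, hy, hmy⟩ := ha'
      obtain ⟨wv, hwv⟩ := hy
      exact ⟨wv, by rw [← hmy, ← hwv, hmulc_apply]⟩
    · rintro ⟨wv, hwv⟩
      show algebraMap (𝓞 K₀) K₀ a ∈ cI'
      exact ⟨ℓ wv, ⟨wv, rfl⟩, by rw [hmulc_apply, ← hwv]⟩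
  have hImap : Submodule.map (Algebra.linearMap (𝓞 K₀) K₀) (IdI : Submodule (𝓞 K₀) (𝓞 K₀)) = cI' := by
    apply le_antisymm
    · rw [hIdIdef]; exact Submodule.map_comap_le _ _
    · rintro z ⟨y, hy, hmy⟩
      obtain ⟨a, ha⟩ := hden y hy
      refine ⟨a, ?_, ?_⟩
      · show algebraMap (𝓞 K₀) K₀ a ∈ cI'
        rw [ha, ← hmulc_apply]
        exact ⟨y, hy, rfl⟩
      · show algebraMap (𝓞 K₀) K₀ a = z
        rw [ha, ← hmulc_apply, hmy]
  have hcI : (c : 𝓞 K₀) ∈ IdI := by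
    refine (hmemI _).mpr ⟨b, ?_⟩
    rw [hℓ, hπb, mul_one, hc'def]
  have hI0 : IdI ≠ ⊥ := by
    intro h
    rw [h] at hcI
    exact hc0 (Submodule.mem_bot _ |>.mp hcI)
  obtain ⟨x, hxI, hgen⟩ := Ideal.exists_span_sup_mul IdI 𝔣₀ hI0 h𝔣₀
  obtain ⟨α, hα⟩ := (hmemI x).mp hxI
  have hscle : Ideal.span {(c : 𝓞 K₀)} ≤ IdI := (Ideal.span_singleton_le_iff_mem _).mpr hcI
  obtain ⟨Jc, hJc⟩ := Ideal.dvd_iff_le.mpr hscle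
  have hcmem : (c : 𝓞 K₀) ∈ IdI * Jc := by
    rw [← hJc]; exact Ideal.mem_span_singleton_self _
  have hrep : ∃ t : Multiset ((𝓞 K₀) × (𝓞 K₀)), (∀ p ∈ t, p.1 ∈ IdI ∧ p.2 ∈ Jc) ∧
      (c : 𝓞 K₀) = (t.map fun p => p.1 * p.2).sum := by
    refine Submodule.mul_induction_on hcmem ?_ ?_
    · intro m hm n hn
      exact ⟨{(m, n)}, by simp [hm, hn]⟩
    · rintro z1 z2 ⟨t1, h1, e1⟩ ⟨t2, h2, e2⟩
      refine ⟨t1 + t2, fun p hp => (Multiset.mem_add.mp hp).elim (h1 p) (h2 p), ?_⟩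
      rw [Multiset.map_add, Multiset.sum_add, ← e1, ← e2]
  obtain ⟨t, htmem, htsum⟩ := hrep
  have hwex : ∀ p : (𝓞 K₀) × (𝓞 K₀), p ∈ t →
      ∃ wp : 𝓞 K, algebraMap (𝓞 K₀) K₀ p.1 = c' * ℓ wp :=
    fun p hp => (hmemI p.1).mp (htmem p hp).1
  choose! w hw using hwex
  set W : K₀ := (t.map fun p => algebraMap (𝓞 K₀) K₀ p.2 * τ' (w p)).sum with hWdef
  have hsum1 : (t.map fun p => algebraMap (𝓞 K₀) K₀ p.2 * ℓ (w p)).sum = 1 := by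
    apply mul_left_cancel₀ hc'0
    rw [mul_one, ← Multiset.sum_map_mul_left]
    have hcongr : (t.map fun p => c' * (algebraMap (𝓞 K₀) K₀ p.2 * ℓ (w p))).sum
        = (t.map fun p => algebraMap (𝓞 K₀) K₀ (p.1 * p.2)).sum := by
      apply congrArg Multiset.sum
      apply Multiset.map_congr rfl
      intro p hp
      rw [map_mul]
      linear_combination (-(algebraMap (𝓞 K₀) K₀ p.2)) * (hw p hp)
    rw [hcongr]
    have hms : (t.map fun p : (𝓞 K₀) × (𝓞 K₀) => algebraMap (𝓞 K₀) K₀ (p.1 * p.2)).sum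
        = algebraMap (𝓞 K₀) K₀ ((t.map fun p : (𝓞 K₀) × (𝓞 K₀) => p.1 * p.2).sum) := by
      rw [map_multiset_sum, Multiset.map_map]
      rfl
    rw [hms, ← htsum, hc'def]
  have hρ : ∀ z : 𝓞 K, ∃ e : 𝓞 K₀, τ' z - W * ℓ z = algebraMap (𝓞 K₀) K₀ e := by
    intro z
    obtain ⟨iz, hiz⟩ := hden (ℓ z) ⟨z, rfl⟩
    have hizI : iz ∈ IdI := (hmemI iz).mpr ⟨z, hiz⟩
    have hrex : ∀ p : (𝓞 K₀) × (𝓞 K₀), p ∈ t →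
        ∃ rp : 𝓞 K₀, algebraMap (𝓞 K₀) K₀ rp = ℓ z * algebraMap (𝓞 K₀) K₀ p.2 := by
      intro p hp
      have hmm : iz * p.2 ∈ Ideal.span {(c : 𝓞 K₀)} := by
        rw [hJc]; exact Ideal.mul_mem_mul hizI (htmem p hp).2
      obtain ⟨r, hr⟩ := Ideal.mem_span_singleton'.mp hmm
      refine ⟨r, mul_left_cancel₀ hc'0 ?_⟩
      have hr' : algebraMap (𝓞 K₀) K₀ (r * c) = algebraMap (𝓞 K₀) K₀ (iz * p.2) := by rw [hr]
      rw [map_mul, map_mul] at hr'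
      rw [← hc'def] at hr'
      linear_combination hr' + algebraMap (𝓞 K₀) K₀ p.2 * hiz
    choose! r hr using hrex
    set sz : 𝓞 K := (t.map fun p => f (r p) * w p).sum with hszdef
    have hℓsum : ∀ (g : (𝓞 K) →ₗ[𝓞 K₀] K₀),
        g sz = (t.map fun p => algebraMap (𝓞 K₀) K₀ (r p) * g (w p)).sum := by
      intro g
      rw [hszdef, map_multiset_sum, Multiset.map_map]
      apply congrArg Multiset.sum
      apply Multiset.map_congr rfl
      intro p _
      show g (f (r p) * w p) = _
      rw [hfdef, ← Algebra.smul_def, map_smul, Algebra.smul_def]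
  -- ℓ (z - sz) = 0
    have hℓsz : ℓ sz = ℓ z := by
      rw [hℓsum ℓ]
      have : (t.map fun p => algebraMap (𝓞 K₀) K₀ (r p) * ℓ (w p)).sum
          = (t.map fun p => ℓ z * (algebraMap (𝓞 K₀) K₀ p.2 * ℓ (w p))).sum := by
        apply congrArg Multiset.sum
        apply Multiset.map_congr rfl
        intro p hp
        rw [hr p hp]; ring
      rw [this, Multiset.sum_map_mul_left, hsum1, mul_one]
    have hℓy : ℓ (z - sz) = 0 := by rw [map_sub, hℓsz, sub_self]
    obtain ⟨e, he⟩ := hKER _ hℓy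
    refine ⟨e, ?_⟩
    have hτy : τ' z - τ' sz = algebraMap (𝓞 K₀) K₀ e := by
      rw [← map_sub, he, hτ'f]
    have hτsz : τ' sz = ℓ z * W := by
      rw [hℓsum τ', hWdef]
      have : (t.map fun p => algebraMap (𝓞 K₀) K₀ (r p) * τ' (w p)).sum
          = (t.map fun p => ℓ z * (algebraMap (𝓞 K₀) K₀ p.2 * τ' (w p))).sum := by
        apply congrArg Multiset.sum
        apply Multiset.map_congr rfl
        intro p hp
        rw [hr p hp]; ring
      rw [this, Multiset.sum_map_mul_left]
    rw [hτsz] at hτy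
    linear_combination hτy
  -- the quotient ideal
  set 𝔉 : Ideal (𝓞 K) := Ideal.map f 𝔣₀ with h𝔉def
  set ρl : (𝓞 K) →ₗ[𝓞 K₀] K₀ :=
    τ' - ((LinearMap.mul K₀ K₀ W).restrictScalars (𝓞 K₀)) ∘ₗ ℓ with hρldef
  have hρl_apply : ∀ z : 𝓞 K, ρl z = τ' z - W * ℓ z := fun z => rfl
  have hcontr : ∀ e : 𝓞 K₀, f e ∈ 𝔉 → e ∈ 𝔣₀ := by
    intro e he
    have h1 : f e ∈ 𝔣₀ • (⊤ : Submodule (𝓞 K₀) (𝓞 K)) := by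
      rw [Ideal.smul_top_eq_map]
      exact he
    have h2 : ρl (f e) ∈ Submodule.map ρl (𝔣₀ • (⊤ : Submodule (𝓞 K₀) (𝓞 K))) :=
      Submodule.mem_map_of_mem h1
    rw [Submodule.map_smul''] at h2
    have h3 : Submodule.map ρl (⊤ : Submodule (𝓞 K₀) (𝓞 K))
        ≤ LinearMap.range (Algebra.linearMap (𝓞 K₀) K₀) := by
      rintro _ ⟨z, -, rfl⟩
      obtain ⟨e', he'⟩ := hρ z
      exact ⟨e', by rw [Algebra.linearMap_apply, ← he', hρl_apply]⟩
    have h4 : ρl (f e) ∈ 𝔣₀ • LinearMap.range (Algebra.linearMap (𝓞 K₀) K₀) :=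
      Submodule.smul_mono le_rfl h3 h2
    rw [LinearMap.range_eq_map, ← Submodule.map_smul''] at h4
    obtain ⟨g, hg, hge⟩ := h4
    have hgf : g ∈ 𝔣₀ := by
      have hle : 𝔣₀ • (⊤ : Submodule (𝓞 K₀) (𝓞 K₀)) ≤ (𝔣₀ : Submodule (𝓞 K₀) (𝓞 K₀)) := by
        rw [Ideal.smul_eq_mul, Ideal.mul_top]
      exact hle hg
    have heq : ρl (f e) = algebraMap (𝓞 K₀) K₀ e := by
      rw [hρl_apply, hτ'f, hℓf, mul_zero, sub_zero]
    have : g = e := by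
      apply IsFractionRing.injective (𝓞 K₀) K₀
      rw [← heq, ← hge, Algebra.linearMap_apply]
    exact this ▸ hgf
  have hkey : Submodule.map (mulc ∘ₗ ℓ) (𝔣₀ • (⊤ : Submodule (𝓞 K₀) (𝓞 K)))
      = Submodule.map (Algebra.linearMap (𝓞 K₀) K₀) ((𝔣₀ * IdI : Ideal (𝓞 K₀)) : Submodule (𝓞 K₀) (𝓞 K₀)) := by
    rw [Submodule.map_comp, Submodule.map_smul'', Submodule.map_top]
    rw [← hI'def, Submodule.map_smul'', ← hcI'def, ← hImap, ← Submodule.map_smul'']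
    congr 1
  have hsurj : ∀ z : 𝓞 K, ∃ e a : 𝓞 K₀, z - (f e + f a * α) ∈ 𝔉 := by
    intro z
    obtain ⟨iz, hiz⟩ := hden (ℓ z) ⟨z, rfl⟩
    have hizI : iz ∈ IdI := (hmemI iz).mpr ⟨z, hiz⟩
    have hmem2 := hgen hizI
    rw [Submodule.mem_sup] at hmem2
    obtain ⟨sx, hsx, gg, hgg, hsum⟩ := hmem2
    obtain ⟨a, ha⟩ := Ideal.mem_span_singleton'.mp hsx
    have hggm : gg ∈ (𝔣₀ * IdI : Ideal (𝓞 K₀)) := by rwa [mul_comm]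
    have h5 : algebraMap (𝓞 K₀) K₀ gg ∈ Submodule.map (Algebra.linearMap (𝓞 K₀) K₀)
        ((𝔣₀ * IdI : Ideal (𝓞 K₀)) : Submodule (𝓞 K₀) (𝓞 K₀)) :=
      ⟨gg, hggm, rfl⟩
    rw [← hkey] at h5
    obtain ⟨v, hv, hveq⟩ := h5
    have hveq' : c' * ℓ v = algebraMap (𝓞 K₀) K₀ gg := hveq
    have hℓeq : ℓ (z - (a • α + v)) = 0 := by
      apply mul_left_cancel₀ hc'0
      rw [mul_zero, map_sub, _root_.map_add]
      have h6 : ℓ (a • α) = algebraMap (𝓞 K₀) K₀ a * ℓ α := by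
        rw [map_smul, Algebra.smul_def]
      rw [h6]
      have hsum' : algebraMap (𝓞 K₀) K₀ iz
          = algebraMap (𝓞 K₀) K₀ (a * x) + algebraMap (𝓞 K₀) K₀ gg := by
        rw [← map_add, ha, hsum]
      rw [map_mul] at hsum'
      linear_combination (-1 : K₀) * hiz + hsum' + algebraMap (𝓞 K₀) K₀ a * hα - hveq'
    obtain ⟨e, he⟩ := hKER _ hℓeq
    rw [Algebra.smul_def, ← hfdef] at he
    refine ⟨e, a, ?_⟩
    have hzv : z - (f e + f a * α) = v := by linear_combination he
    rw [hzv]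
    have hv' : v ∈ (Ideal.map (algebraMap (𝓞 K₀) (𝓞 K)) 𝔣₀).restrictScalars (𝓞 K₀) := by
      rw [← Ideal.smul_top_eq_map]; exact hv
    exact hv'
  have hinj : ∀ e a : 𝓞 K₀, f e + f a * α ∈ 𝔉 → e ∈ 𝔣₀ ∧ a ∈ 𝔣₀ := by
    intro e a hme
    have hmem' : f e + f a * α ∈ 𝔣₀ • (⊤ : Submodule (𝓞 K₀) (𝓞 K)) := by
      rw [Ideal.smul_top_eq_map]; exact hme
    have h1 : (mulc ∘ₗ ℓ) (f e + f a * α) ∈ Submodule.map (mulc ∘ₗ ℓ)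
        (𝔣₀ • (⊤ : Submodule (𝓞 K₀) (𝓞 K))) := Submodule.mem_map_of_mem hmem'
    rw [hkey] at h1
    obtain ⟨gax, hgax, hgax2⟩ := h1
    have hℓv : ℓ (f e + f a * α) = algebraMap (𝓞 K₀) K₀ a * ℓ α := by
      rw [_root_.map_add, hℓf, zero_add, hfdef, ← Algebra.smul_def, map_smul, Algebra.smul_def]
    have hgax2' : algebraMap (𝓞 K₀) K₀ gax = algebraMap (𝓞 K₀) K₀ (a * x) := by
      have h7 : algebraMap (𝓞 K₀) K₀ gax = c' * ℓ (f e + f a * α) := hgax2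
      rw [h7, hℓv, map_mul]
      linear_combination (-(algebraMap (𝓞 K₀) K₀ a)) * hα
    have hax : a * x ∈ (𝔣₀ * IdI : Ideal (𝓞 K₀)) := by
      have : gax = a * x := IsFractionRing.injective (𝓞 K₀) K₀ hgax2'
      rwa [← this]
    have haf : a ∈ 𝔣₀ := by
      have hle : Ideal.span {a} * IdI ≤ 𝔣₀ * IdI := by
        refine le_trans (Ideal.mul_mono_right hgen) ?_
        rw [Ideal.mul_sup]
        apply sup_le
        · rw [Ideal.span_singleton_mul_span_singleton]
          exact (Ideal.span_singleton_le_iff_mem _).mpr hax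
        · refine le_trans Ideal.mul_le_right ?_
          rw [mul_comm]
      have hdvd : 𝔣₀ * IdI ∣ Ideal.span {a} * IdI := Ideal.dvd_iff_le.mpr hle
      have hdvd2 : 𝔣₀ ∣ Ideal.span {a} := (mul_dvd_mul_iff_right
        (by simpa [Submodule.zero_eq_bot] using hI0 : IdI ≠ 0)).mp hdvd
      exact (Ideal.span_singleton_le_iff_mem _).mp (Ideal.le_of_dvd hdvd2)
    refine ⟨?_, haf⟩
    apply hcontr
    have : f e = (f e + f a * α) - f a * α := by ring
    rw [this]
    exact sub_mem hme (Ideal.mul_mem_right _ _ (Ideal.mem_map_of_mem f haf))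
  refine ⟨α, fun z => ?_⟩
  obtain ⟨zB, rfl⟩ := Ideal.Quotient.mk_surjective z
  obtain ⟨e, a, hea⟩ := hsurj zB
  refine ⟨(Ideal.Quotient.mk 𝔣₀ e, Ideal.Quotient.mk 𝔣₀ a), ?_, ?_⟩
  · show Ideal.Quotient.mk 𝔉 zB = _
    rw [Ideal.quotientMap_mk, Ideal.quotientMap_mk, ← map_mul, ← _root_.map_add]
    exact (Ideal.Quotient.mk_eq_mk_iff_sub_mem _ _).mpr hea
  · rintro ⟨p1, p2⟩ hp
    obtain ⟨e1, rfl⟩ := Ideal.Quotient.mk_surjective p1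
    obtain ⟨a1, rfl⟩ := Ideal.Quotient.mk_surjective p2
    simp only [Ideal.quotientMap_mk] at hp
    rw [← map_mul, ← _root_.map_add] at hp
    have h8 : zB - (f e1 + f a1 * α) ∈ 𝔉 := (Ideal.Quotient.mk_eq_mk_iff_sub_mem _ _).mp hp
    have h9 : f (e1 - e) + f (a1 - a) * α ∈ 𝔉 := by
      have h9' : f (e1 - e) + f (a1 - a) * α
          = (zB - (f e + f a * α)) - (zB - (f e1 + f a1 * α)) := by
        rw [map_sub, map_sub]; ring
      rw [h9']
      exact sub_mem hea h8
    obtain ⟨he', ha'⟩ := hinj _ _ h9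
    have he2 : Ideal.Quotient.mk 𝔣₀ e1 = Ideal.Quotient.mk 𝔣₀ e :=
      (Ideal.Quotient.mk_eq_mk_iff_sub_mem _ _).mpr he'
    have ha2 : Ideal.Quotient.mk 𝔣₀ a1 = Ideal.Quotient.mk 𝔣₀ a :=
      (Ideal.Quotient.mk_eq_mk_iff_sub_mem _ _).mpr ha'
    exact Prod.ext he2 ha2
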